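/- Let T be a finite rooted tree and ≺ a linear order on V(T) compatible with T, such that the ordered graph (T, ≺) has cutwidth at most c and T has depth at most p. Then |V(T)| ≤ C(p + c − 1, c), where C(·,·) denotes the binomial coefficient. -/

import Mathlib

/-- `(G, ≺)` (on `Fin n` with its natural order) is ordered along a Hamiltonian path:
consecutive vertices are adjacent. -/
def OrderedAlongHamPath {n : ℕ} (G : SimpleGraph (Fin n)) : Prop :=
  ∀ i : Fin n, ∀ h : (i : ℕ) + 1 < n, G.Adj i ⟨(i : ℕ) + 1, h⟩

/-- An induced path of size `s`: `s` distinct vertices, adjacent iff consecutive. -/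
def IsInducedPath {n : ℕ} (G : SimpleGraph (Fin n)) {s : ℕ} (v : Fin s → Fin n) : Prop :=
  Function.Injective v ∧
    ∀ i j : Fin s, G.Adj (v i) (v j) ↔ ((i : ℕ) + 1 = (j : ℕ) ∨ (j : ℕ) + 1 = (i : ℕ))

/-- An increasing induced path. -/
def IsIncreasingInducedPath {n : ℕ} (G : SimpleGraph (Fin n)) {s : ℕ} (v : Fin s → Fin n) : Prop :=
  StrictMono v ∧
    ∀ i j : Fin s, G.Adj (v i) (v j) ↔ ((i : ℕ) + 1 = (j : ℕ) ∨ (j : ℕ) + 1 = (i : ℕ))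

/-- A set of edges is non-crossing. -/
def NonCrossing {n : ℕ} (F : Set (Sym2 (Fin n))) : Prop :=
  ¬ ∃ a b c d : Fin n, a < c ∧ c < b ∧ b < d ∧ s(a, b) ∈ F ∧ s(c, d) ∈ F

/-- `(G, ≺)` is `k`-non-crossing: the edge set partitions into `k` non-crossing sets. -/
def KNonCrossing {n : ℕ} (G : SimpleGraph (Fin n)) (k : ℕ) : Prop :=
  ∃ E : Fin k → Set (Sym2 (Fin n)),
    (⋃ i, E i) = G.edgeSet ∧ (∀ i j, i ≠ j → Disjoint (E i) (E j)) ∧ ∀ i, NonCrossing (E i)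

/-- An interval of the ordering. -/
def IsInterval {n : ℕ} (I : Set (Fin n)) : Prop :=
  ∀ a ∈ I, ∀ b ∈ I, ∀ x : Fin n, a ≤ x → x ≤ b → x ∈ I

/-- The gap of `u` towards `I` is at least `g`. -/
def HasGapAtLeast {n : ℕ} (G : SimpleGraph (Fin n)) (u : Fin n) (I : Set (Fin n)) (g : ℕ) : Prop :=
  ∃ a b : Fin n, a ∈ I ∧ b ∈ I ∧ a ≤ b ∧ g ≤ (b : ℕ) - (a : ℕ) ∧
    ∀ x ∈ Set.Icc a b, ¬ G.Adj u x

/-- The edges of `F` crossing the cut just after position `t`. -/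
def CutAt {n : ℕ} (F : Set (Sym2 (Fin n))) (t : Fin n) : Set (Sym2 (Fin n)) :=
  {e | e ∈ F ∧ ∃ a b : Fin n, e = s(a, b) ∧ a ≤ t ∧ t < b}

/-- The set of edges `F` (on ordered vertex set `Fin n`) has cutwidth at most `c`. -/
def CutwidthLE {n : ℕ} (F : Set (Sym2 (Fin n))) (c : ℕ) : Prop :=
  ∀ t : Fin n, (CutAt F t).ncard ≤ c

section StmtSevenAux

open SimpleGraph

variable {m : ℕ} {T : SimpleGraph (Fin m)} {r : Fin m}

private lemma stmt7_on_path (hT : T.Connected) {u v : Fin m} (W : T.Walk r v)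
    (hW : W.length = T.dist r v) (hu : u ∈ W.support) :
    T.dist r u + T.dist u v = T.dist r v := by
  have h1 : T.dist r u ≤ (W.takeUntil u hu).length := SimpleGraph.dist_le _
  have h2 : T.dist u v ≤ (W.dropUntil u hu).length := SimpleGraph.dist_le _
  have h3 : (W.takeUntil u hu).length + (W.dropUntil u hu).length = W.length := by
    rw [← SimpleGraph.Walk.length_append, W.take_spec hu]
  have h4 : T.dist r v ≤ T.dist r u + T.dist u v := hT.dist_triangle
  omega

private lemma stmt7_concat_isPath {u v w : Fin m} (P : T.Walk u v) (hP : P.IsPath)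
    (h : T.Adj v w) (hw : w ∉ P.support) : (P.concat h).IsPath := by
  have : ((P.concat h).reverse).IsPath := by
    rw [SimpleGraph.Walk.reverse_concat]
    exact SimpleGraph.Walk.IsPath.cons hP.reverse (by simpa using hw)
  have h' := this.reverse
  rwa [SimpleGraph.Walk.reverse_reverse] at h'

/-- In the tree with compatible order, an edge goes from low to high with depth +1. -/
private lemma stmt7_adj_dist (hT : T.IsTree)
    (hcompat : ∀ u v : Fin m, u ≠ v → T.dist r u + T.dist u v = T.dist r v → v < u)
    {a b : Fin m} (h : T.Adj a b) (hlt : b < a) : T.dist r b = T.dist r a + 1 := by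
  have conn := hT.isConnected
  have hab : T.dist a b = 1 := (SimpleGraph.dist_eq_one_iff_adj).2 h
  have hba : T.dist b a = 1 := (SimpleGraph.dist_eq_one_iff_adj).2 h.symm
  have tri1 : T.dist r b ≤ T.dist r a + 1 := by
    have := conn.dist_triangle (u := r) (v := a) (w := b); omega
  have tri2 : T.dist r a ≤ T.dist r b + 1 := by
    have := conn.dist_triangle (u := r) (v := b) (w := a); omega
  have hne : b ≠ a := hlt.ne
  rcases (by omega : T.dist r b + 1 = T.dist r a ∨ T.dist r b = T.dist r a ∨
      T.dist r b = T.dist r a + 1) with hc | hc | hc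
  · exact absurd (hcompat b a hne (by omega)) (by exact fun h' => absurd hlt (asymm h'))
  · exfalso
    obtain ⟨P, hPp, hPl⟩ := conn.exists_path_of_dist r a
    by_cases hb : b ∈ P.support
    · have := stmt7_on_path conn P hPl hb
      have : T.dist b a = 0 := by omega
      exact hne ((conn.dist_eq_zero_iff).1 this)
    · have hP' : (P.concat h).IsPath := stmt7_concat_isPath P hPp h hb
      obtain ⟨Q, hQp, hQl⟩ := conn.exists_path_of_dist r b
      have := (hT.existsUnique_path r b).unique hP' hQp
      have hlen : (P.concat h).length = Q.length := by rw [this]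
      rw [SimpleGraph.Walk.length_concat, hPl, hQl] at hlen
      omega
  · exact hc

/-- Every non-root vertex has a neighbor above it (its parent). -/
private lemma stmt7_parent_exists (hT : T.IsTree) {v : Fin m} (hv : v ≠ r) :
    ∃ w, T.Adj v w ∧ T.dist r w + 1 = T.dist r v := by
  have conn := hT.isConnected
  obtain ⟨P, hPp, hPl⟩ := conn.exists_path_of_dist r v
  cases hQ : P.reverse with
  | nil => exact absurd rfl hv
  | cons h tail =>
    rename_i w
    refine ⟨w, h, ?_⟩
    have hlen : tail.length + 1 = T.dist r v := by
      have h5 := congrArg SimpleGraph.Walk.length hQ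
      simp at h5
      omega
    have h1 : T.dist r w ≤ tail.length := by
      have := SimpleGraph.dist_le tail.reverse
      simpa [SimpleGraph.dist_comm] using this
    have h2 : T.dist r v ≤ T.dist r w + 1 := by
      have h6 := conn.dist_triangle (u := r) (v := w) (w := v)
      have h7 : T.dist w v = 1 := (SimpleGraph.dist_eq_one_iff_adj).2 h.symm
      omega
    omega

private lemma stmt7_lt_root
    (hcompat : ∀ u v : Fin m, u ≠ v → T.dist r u + T.dist u v = T.dist r v → v < u)
    {v : Fin m} (hv : v ≠ r) : v < r :=
  hcompat r v (Ne.symm hv) (by simp)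

private lemma stmt7_parent_lt (hT : T.IsTree)
    (hcompat : ∀ u v : Fin m, u ≠ v → T.dist r u + T.dist u v = T.dist r v → v < u)
    {v w : Fin m} (h : T.Adj v w) (hd : T.dist r w + 1 = T.dist r v) : v < w := by
  rcases lt_trichotomy v w with hc | hc | hc
  · exact hc
  · exact absurd hc h.ne
  · have := stmt7_adj_dist hT hcompat h hc
    omega

private lemma stmt7_parent_unique (hT : T.IsTree)
    (hcompat : ∀ u v : Fin m, u ≠ v → T.dist r u + T.dist u v = T.dist r v → v < u)
    {v w1 w2 : Fin m} (h1 : T.Adj v w1) (l1 : v < w1) (h2 : T.Adj v w2) (l2 : v < w2) :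
    w1 = w2 := by
  have conn := hT.isConnected
  by_contra hne
  have d1 : T.dist r v = T.dist r w1 + 1 := stmt7_adj_dist hT hcompat h1.symm l1
  have d2 : T.dist r v = T.dist r w2 + 1 := stmt7_adj_dist hT hcompat h2.symm l2
  obtain ⟨P1, hP1p, hP1l⟩ := conn.exists_path_of_dist r w1
  obtain ⟨P2, hP2p, hP2l⟩ := conn.exists_path_of_dist r w2
  have hv1 : v ∉ P1.support := by
    intro hmem
    have := stmt7_on_path conn P1 hP1l hmem
    omega
  have hv2 : v ∉ P2.support := by
    intro hmem
    have := stmt7_on_path conn P2 hP2l hmem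
    omega
  have hQ1 : (P1.concat h1.symm).IsPath := stmt7_concat_isPath P1 hP1p h1.symm hv1
  have hQ2 : (P2.concat h2.symm).IsPath := stmt7_concat_isPath P2 hP2p h2.symm hv2
  have heq := (hT.existsUnique_path r v).unique hQ1 hQ2
  have hw2 : w2 ∈ (P2.concat h2.symm).support := by
    rw [SimpleGraph.Walk.support_concat]
    exact List.mem_append.2 (Or.inl (SimpleGraph.Walk.end_mem_support P2))
  rw [← heq, SimpleGraph.Walk.support_concat] at hw2
  rcases List.mem_append.1 hw2 with hmem | hmem
  · have := stmt7_on_path conn P1 hP1l hmem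
    have hz : T.dist w2 w1 = 0 := by omega
    exact hne ((conn.dist_eq_zero_iff).1 hz).symm
  · simp at hmem
    exact absurd hmem (by intro h; exact h2.ne h.symm)

/-- smaller endpoint of an edge -/
private def elow {n : ℕ} (e : Sym2 (Fin n)) : Fin n :=
  Sym2.lift ⟨fun a b => min a b, fun a b => min_comm a b⟩ e

/-- larger endpoint of an edge -/
private def ehigh {n : ℕ} (e : Sym2 (Fin n)) : Fin n :=
  Sym2.lift ⟨fun a b => max a b, fun a b => max_comm a b⟩ e

@[simp] private lemma elow_mk {n : ℕ} (a b : Fin n) : elow s(a, b) = min a b := rfl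
@[simp] private lemma ehigh_mk {n : ℕ} (a b : Fin n) : ehigh s(a, b) = max a b := rfl

private lemma eq_mk_low_high {n : ℕ} (e : Sym2 (Fin n)) : e = s(elow e, ehigh e) := by
  induction e with
  | _ a b =>
    rcases le_total a b with h | h
    · simp [min_eq_left h, max_eq_right h]
    · rw [Sym2.eq_swap]; simp [min_eq_right h, max_eq_left h, h]

private lemma mem_cutAt_iff {n : ℕ} (F : Set (Sym2 (Fin n))) (t : Fin n) (e : Sym2 (Fin n)) :
    e ∈ CutAt F t ↔ e ∈ F ∧ elow e ≤ t ∧ t < ehigh e := by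
  constructor
  · rintro ⟨hF, a, b, rfl, h1, h2⟩
    exact ⟨hF, le_trans (min_le_left a b) h1, lt_of_lt_of_le h2 (le_max_right a b)⟩
  · rintro ⟨hF, h1, h2⟩
    exact ⟨hF, elow e, ehigh e, eq_mk_low_high e, h1, h2⟩

private lemma stmt7_low_lt_high {n : ℕ} {G : SimpleGraph (Fin n)} {e : Sym2 (Fin n)}
    (he : e ∈ G.edgeSet) : elow e < ehigh e ∧ G.Adj (elow e) (ehigh e) := by
  induction e with
  | _ a b =>
    have hadj : G.Adj a b := he
    rcases le_total a b with h | h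
    · simp only [elow_mk, ehigh_mk, min_eq_left h, max_eq_right h]
      exact ⟨lt_of_le_of_ne h hadj.ne, hadj⟩
    · simp only [elow_mk, ehigh_mk, min_eq_right h, max_eq_left h]
      exact ⟨lt_of_le_of_ne h hadj.symm.ne, hadj.symm⟩

end StmtSevenAux

/-- a rooted tree with a compatible vertex order (descendants come before
their ancestors) of cutwidth at most `c` and depth at most `p` has at most
`C(p + c - 1, c)` vertices.  In a tree, `u` lies on the (unique) path from the root `r`
to `v` iff `dist r u + dist u v = dist r v`. -/
theorem stmt7 {m c p : ℕ} (hm : 0 < m) (T : SimpleGraph (Fin m)) (hT : T.IsTree)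
    (r : Fin m)
    (hcompat : ∀ u v : Fin m, u ≠ v → T.dist r u + T.dist u v = T.dist r v → v < u)
    (hcw : CutwidthLE T.edgeSet c)
    (hdepth : ∀ v : Fin m, T.dist r v + 1 ≤ p) :
    m ≤ Nat.choose (p + c - 1) c := by
  classical
  have conn := hT.isConnected
  have hp1 : 1 ≤ p := by have := hdepth r; omega
  have hdle : ∀ v : Fin m, T.dist r v ≤ p - 1 := fun v => by have := hdepth v; omega
  -- the cut at `t` as a finset
  set cutF : Fin m → Finset (Sym2 (Fin m)) :=
    fun t => (Set.toFinite (CutAt T.edgeSet t)).toFinset with hcutFdef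
  have hcutF : ∀ (t : Fin m) (e : Sym2 (Fin m)),
      e ∈ cutF t ↔ e ∈ T.edgeSet ∧ elow e ≤ t ∧ t < ehigh e := by
    intro t e
    rw [hcutFdef, Set.Finite.mem_toFinset]
    exact mem_cutAt_iff _ _ _
  have hcard : ∀ t, (cutF t).card ≤ c := by
    intro t
    have h := hcw t
    rwa [Set.ncard_eq_toFinset_card _ (Set.toFinite _)] at h
  set B : ℕ := c + 1 with hBdef
  set Nf : Fin m → ℕ := fun t => ∑ e ∈ cutF t, B ^ (p - 1 - T.dist r (elow e)) with hNfdef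
  -- every edge of the tree: the low endpoint is one deeper than the high endpoint
  have hedge : ∀ e ∈ T.edgeSet, T.dist r (elow e) = T.dist r (ehigh e) + 1 := by
    intro e he
    obtain ⟨hlh, hadj⟩ := stmt7_low_lt_high he
    exact stmt7_adj_dist hT hcompat hadj.symm hlh
  -- the key step: crossing one non-root vertex strictly increases Nf
  have key : ∀ (i : ℕ) (h1 : i + 1 < m), (⟨i + 1, h1⟩ : Fin m) ≠ r →
      Nf ⟨i, by omega⟩ < Nf ⟨i + 1, h1⟩ := by
    intro i h1 hvr
    set t : Fin m := ⟨i, by omega⟩ with htdef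
    set v : Fin m := ⟨i + 1, h1⟩ with hvdef
    obtain ⟨w, hadj, hdw⟩ := stmt7_parent_exists hT hvr
    have hvw : v < w := stmt7_parent_lt hT hcompat hadj hdw
    have hew : s(v, w) ∈ T.edgeSet := hadj
    have hlow : elow s(v, w) = v := by simp [min_eq_left hvw.le]
    have hhigh : ehigh s(v, w) = w := by simp [max_eq_right hvw.le]
    have hset : cutF v = insert s(v, w) ((cutF t).filter (fun e => ehigh e ≠ v)) := by
      ext e
      simp only [Finset.mem_insert, Finset.mem_filter, hcutF]
      constructor
      · rintro ⟨hE, hl, hh⟩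
        by_cases hev : elow e = v
        · left
          obtain ⟨hlh, hadj'⟩ := stmt7_low_lt_high hE
          rw [hev] at hlh hadj'
          have := stmt7_parent_unique hT hcompat hadj' hlh hadj hvw
          rw [eq_mk_low_high e, hev, this]
        · right
          have hl' : (elow e : ℕ) ≤ i + 1 := hl
          have hh' : i + 1 < (ehigh e : ℕ) := hh
          have hev' : (elow e : ℕ) ≠ i + 1 := fun hc => hev (Fin.ext hc)
          refine ⟨⟨hE, ?_, ?_⟩, ?_⟩
          · show (elow e : ℕ) ≤ i; omega
          · show (i : ℕ) < (ehigh e : ℕ); omega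
          · intro hc
            rw [hc] at hh'
            omega
      · rintro (rfl | ⟨⟨hE, hl, hh⟩, hhv⟩)
        · refine ⟨hew, ?_, ?_⟩
          · rw [hlow]
          · rw [hhigh]; exact hvw
        · have hl' : (elow e : ℕ) ≤ i := hl
          have hh' : (i : ℕ) < (ehigh e : ℕ) := hh
          have hhv' : (ehigh e : ℕ) ≠ i + 1 := fun hc => hhv (Fin.ext hc)
          exact ⟨hE, by show (elow e : ℕ) ≤ i + 1; omega,
            by show (i : ℕ) + 1 < (ehigh e : ℕ); omega⟩
    have hnotmem : s(v, w) ∉ (cutF t).filter (fun e => ehigh e ≠ v) := by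
      intro hmem
      have h2 := ((hcutF t _).1 (Finset.mem_filter.1 hmem).1).2.1
      rw [hlow] at h2
      have : (i : ℕ) + 1 ≤ i := h2
      omega
    have hNv : Nf v = B ^ (p - 1 - T.dist r v) +
        ∑ e ∈ (cutF t).filter (fun e => ehigh e ≠ v), B ^ (p - 1 - T.dist r (elow e)) := by
      rw [hNfdef]
      simp only []
      rw [hset, Finset.sum_insert hnotmem, hlow]
    have hNt : Nf t = (∑ e ∈ (cutF t).filter (fun e => ehigh e ≠ v),
          B ^ (p - 1 - T.dist r (elow e))) +
        ∑ e ∈ (cutF t).filter (fun e => ¬ ehigh e ≠ v), B ^ (p - 1 - T.dist r (elow e)) := by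
      rw [hNfdef]
      simp only []
      rw [Finset.sum_filter_add_sum_filter_not]
    set dv : ℕ := T.dist r v with hdvdef
    have hterm : ∀ e ∈ (cutF t).filter (fun e => ¬ ehigh e ≠ v),
        B ^ (p - 1 - T.dist r (elow e)) = B ^ (p - 1 - (dv + 1)) := by
      intro e he
      simp only [Finset.mem_filter, not_not] at he
      obtain ⟨hmem, hhv⟩ := he
      have hE := ((hcutF t e).1 hmem).1
      have hde := hedge e hE
      rw [hhv] at hde
      rw [hde]
    have hlt2 : (∑ e ∈ (cutF t).filter (fun e => ¬ ehigh e ≠ v),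
        B ^ (p - 1 - T.dist r (elow e))) < B ^ (p - 1 - dv) := by
      rcases Finset.eq_empty_or_nonempty ((cutF t).filter (fun e => ¬ ehigh e ≠ v)) with
        hemp | ⟨e0, he0⟩
      · rw [hemp]
        simp only [Finset.sum_empty]
        exact pow_pos (by omega) _
      · have hdp : dv + 2 ≤ p := by
          simp only [Finset.mem_filter, not_not] at he0
          obtain ⟨hmem, hhv⟩ := he0
          have hE := ((hcutF t e0).1 hmem).1
          have hde := hedge e0 hE
          rw [hhv] at hde
          have := hdepth (elow e0)
          omega
        have hsum := Finset.sum_const_nat hterm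
        rw [hsum]
        have hcle : ((cutF t).filter (fun e => ¬ ehigh e ≠ v)).card ≤ c :=
          le_trans (Finset.card_filter_le _ _) (hcard t)
        have hexp : p - 1 - dv = (p - 1 - (dv + 1)) + 1 := by omega
        rw [hexp, pow_succ]
        calc ((cutF t).filter (fun e => ¬ ehigh e ≠ v)).card * B ^ (p - 1 - (dv + 1))
            ≤ c * B ^ (p - 1 - (dv + 1)) :=
              Nat.mul_le_mul_right _ hcle
          _ < B * B ^ (p - 1 - (dv + 1)) := by
              have hX : 0 < B ^ (p - 1 - (dv + 1)) := pow_pos (by omega) _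
              exact mul_lt_mul_of_pos_right (by omega) hX
          _ = B ^ (p - 1 - (dv + 1)) * B := mul_comm _ _
    show Nf t < Nf v
    omega
  -- position of the root
  have hrval : (r : ℕ) = m - 1 := by
    have h2 : ∀ v : Fin m, (v : ℕ) ≤ (r : ℕ) := by
      intro v
      by_cases h : v = r
      · rw [h]
      · exact (stmt7_lt_root hcompat h).le
    have h3 : m - 1 ≤ (r : ℕ) := by simpa using h2 ⟨m - 1, by omega⟩
    have h4 := r.isLt
    omega
  -- the cut at the root is empty
  have hzero : Nf r = 0 := by
    have hemp : cutF r = ∅ := by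
      ext e
      simp only [hcutF, Finset.notMem_empty, iff_false]
      rintro ⟨hE, hl, hh⟩
      exact lt_irrefl _ (hh.trans (stmt7_lt_root hcompat hh.ne'))
    rw [hNfdef]
    simp only []
    rw [hemp, Finset.sum_empty]
  -- the cut below any non-root vertex is non-empty
  have hpos : ∀ (i : ℕ) (h : i < m), (⟨i, h⟩ : Fin m) ≠ r → 0 < Nf ⟨i, h⟩ := by
    intro i h hir
    obtain ⟨w, hadj, hdw⟩ := stmt7_parent_exists hT hir
    have hvw := stmt7_parent_lt hT hcompat hadj hdw
    have hmem : s(⟨i, h⟩, w) ∈ cutF ⟨i, h⟩ := by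
      rw [hcutF]
      refine ⟨hadj, ?_, ?_⟩
      · rw [elow_mk, min_eq_left hvw.le]
      · rw [ehigh_mk, max_eq_right hvw.le]; exact hvw
    exact Finset.sum_pos' (fun e _ => Nat.zero_le _)
      ⟨_, hmem, pow_pos (by omega) _⟩
  -- monotonicity along the order
  have mono : ∀ j, ∀ (hj : j < m), j + 1 ≤ m - 1 → ∀ i (hi : i < m), i < j →
      Nf ⟨i, hi⟩ < Nf ⟨j, hj⟩ := by
    intro j
    induction j with
    | zero => intro _ _ i _ hij; omega
    | succ k ih =>
      intro hj hjm i hi hij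
      have hk : k < m := by omega
      have hne : (⟨k + 1, hj⟩ : Fin m) ≠ r := by
        intro h
        have hh := congrArg Fin.val h
        have hval : ((⟨k + 1, hj⟩ : Fin m) : ℕ) = k + 1 := rfl
        rw [hrval, hval] at hh
        omega
      have hstep := key k hj hne
      rcases Nat.lt_or_ge i k with h | h
      · exact (ih hk (by omega) i hi h).trans hstep
      · have hik : i = k := by omega
        subst hik
        exact hstep
  -- Nf is injective
  have hNlt : ∀ t1 t2 : Fin m, t1 < t2 → Nf t1 ≠ Nf t2 := by
    intro t1 t2 hlt
    by_cases h2 : t2 = r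
    · have h1r : t1 ≠ r := fun hc => hlt.ne (hc.trans h2.symm)
      have hposn := hpos t1.val t1.isLt (by simpa using h1r)
      have he1 : Nf ⟨t1.val, t1.isLt⟩ = Nf t1 := rfl
      rw [h2, hzero]
      omega
    · have h2v : (t2 : ℕ) + 1 ≤ m - 1 := by
        have := stmt7_lt_root hcompat h2
        rw [Fin.lt_def, hrval] at this
        omega
      have := mono t2.val t2.isLt h2v t1.val t1.isLt hlt
      have he1 : Nf ⟨t1.val, t1.isLt⟩ = Nf t1 := rfl
      have he2 : Nf ⟨t2.val, t2.isLt⟩ = Nf t2 := rfl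
      omega
  have hNinj : Function.Injective Nf := by
    intro t1 t2 h
    by_contra hne
    rcases lt_or_gt_of_ne hne with hlt | hlt
    · exact hNlt t1 t2 hlt h
    · exact hNlt t2 t1 hlt h.symm
  -- encode cuts as multisets of depths
  set φ : Sym2 (Fin m) → Fin p := fun e => ⟨min (T.dist r (elow e)) (p - 1), by omega⟩
    with hφdef
  have hφval : ∀ e, (φ e : ℕ) = T.dist r (elow e) := fun e => min_eq_left (hdle _)
  set μ : Fin m → Multiset (Fin p) := fun t => (cutF t).val.map φ with hμdef
  have hNμ : ∀ t, Nf t = ((μ t).map (fun x : Fin p => B ^ (p - 1 - (x : ℕ)))).sum := by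
    intro t
    rw [hNfdef, hμdef]
    simp only []
    rw [Multiset.map_map, Finset.sum_eq_multiset_sum]
    apply congrArg
    apply Multiset.map_congr rfl
    intro e _
    simp only [Function.comp_apply]
    have := hdle (elow e)
    congr 1
    have := hφval e
    omega
  have hzero_lt : (0 : ℕ) < p := hp1
  have hcardμ : ∀ t, Multiset.card (μ t) = (cutF t).card := by
    intro t
    rw [hμdef]
    simp
  set Ff : Fin m → Sym (Fin p) c := fun t =>
    ⟨μ t + Multiset.replicate (c - (cutF t).card) (⟨0, hzero_lt⟩ : Fin p), by
      simp only [Multiset.card_add, Multiset.card_replicate, hcardμ]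
      have := hcard t
      omega⟩ with hFfdef
  have hμne : ∀ (t : Fin m) (x : Fin p), x ∈ μ t → x ≠ ⟨0, hzero_lt⟩ := by
    intro t x hx
    rw [hμdef] at hx
    simp only [Multiset.mem_map] at hx
    obtain ⟨e, he, rfl⟩ := hx
    have hE := ((hcutF t e).1 (by exact he)).1
    have := hedge e hE
    intro hc
    have hval := congrArg Fin.val hc
    rw [hφval] at hval
    have hz : ((⟨0, hzero_lt⟩ : Fin p) : ℕ) = 0 := rfl
    rw [hz] at hval
    omega
  have hFinj : Function.Injective Ff := by
    intro t1 t2 hF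
    have hM := congrArg Subtype.val hF
    simp only [hFfdef] at hM
    have hfil : ∀ t : Fin m,
        Multiset.filter (fun x => x ≠ (⟨0, hzero_lt⟩ : Fin p))
          (μ t + Multiset.replicate (c - (cutF t).card) (⟨0, hzero_lt⟩ : Fin p)) = μ t := by
      intro t
      rw [Multiset.filter_add]
      have h1 : Multiset.filter (fun x => x ≠ (⟨0, hzero_lt⟩ : Fin p)) (μ t) = μ t :=
        Multiset.filter_eq_self.2 (hμne t)
      have h2 : Multiset.filter (fun x => x ≠ (⟨0, hzero_lt⟩ : Fin p))
          (Multiset.replicate (c - (cutF t).card) (⟨0, hzero_lt⟩ : Fin p)) = 0 := by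
        rw [Multiset.filter_eq_nil]
        intro a ha
        rw [Multiset.eq_of_mem_replicate ha]
        simp
      rw [h1, h2, add_zero]
    have hμeq : μ t1 = μ t2 := by
      rw [← hfil t1, ← hfil t2, hM]
    apply hNinj
    rw [hNμ, hNμ, hμeq]
  have hle := Fintype.card_le_of_injective Ff hFinj
  rw [Fintype.card_fin] at hle
  rw [Sym.card_sym_eq_choose, Fintype.card_fin] at hle
  exact hle
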